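/- arXiv:1804.02802 — 2 statements merged into one kernel-verified Lean document; each statement's English description precedes it below -/
import Mathlib

section
/- Every finite connected simple graph satisfying property (P1) also satisfies property (P2). -/
open SimpleGraph

/-- The closed neighborhood `N[v]` of a vertex. -/
def cNbr {V : Type} (G : SimpleGraph V) (v : V) : Set V := insert v (G.neighborSet v)

/-- `N(c,x)`: the neighbors of `c` lying on a shortest path from `c` to `x`. -/
def stepSet {V : Type} (G : SimpleGraph V) (c x : V) : Set V :=
  {v | G.Adj c v ∧ G.dist c x = 1 + G.dist v x}

/-- Property (P1): the four-point condition. -/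
def P1 {V : Type} (G : SimpleGraph V) : Prop :=
  ∀ c c' x y : V,
    (G.dist c c' + G.dist x y ≤ G.dist c x + G.dist c' y ∧
      G.dist c x + G.dist c' y = G.dist c y + G.dist c' x) ∨
    (G.dist c x + G.dist c' y ≤ G.dist c c' + G.dist x y ∧
      G.dist c c' + G.dist x y = G.dist c y + G.dist c' x) ∨
    (G.dist c y + G.dist c' x ≤ G.dist c c' + G.dist x y ∧
      G.dist c c' + G.dist x y = G.dist c x + G.dist c' y)

/-- Property (P2). -/
def P2 {V : Type} (G : SimpleGraph V) : Prop :=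
  ∀ c x : V, 2 ≤ G.dist c x → ∀ c' ∈ stepSet G c x, ∀ y : V, 2 ≤ G.dist c' y →
    G.dist c y = G.dist c c' + G.dist c' y ∨ G.dist x y = G.dist x c' + G.dist c' y

/-- A (P3)-witness for `G`. -/
def P3Witness {V : Type} (G : SimpleGraph V) (S : Set V) : Prop :=
  (∀ v : V, v ∈ S ∨ ∃ s ∈ S, G.Adj v s) ∧
  ∀ c ∈ S, ∀ x : V, 2 ≤ G.dist c x →
    ∃ c' ∈ stepSet G c x ∩ S, ∀ y : V, 2 ≤ G.dist c' y →
      G.dist c y = G.dist c c' + G.dist c' y ∨ G.dist x y = G.dist x c' + G.dist c' y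

/-- Property (P3). -/
def P3 {V : Type} (G : SimpleGraph V) : Prop := ∃ S : Set V, P3Witness G S

/-- `C(c,x)` relative to a set `S`. -/
def CSet {V : Type} (G : SimpleGraph V) (S : Set V) (c x : V) : Set V :=
  {u | u ∈ stepSet G c x ∩ S ∧ ∀ v ∈ stepSet G c x, cNbr G v ⊆ cNbr G u}

/-- A cut vertex of a connected graph: its removal disconnects the graph. -/
def IsCutVertex {V : Type} (G : SimpleGraph V) (v : V) : Prop :=
  G.Connected ∧ ¬ (G.induce {u | u ≠ v}).Connected

/-- A set of vertices inducing a connected subgraph with no cut vertex of its own. -/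
def NoCutSet {V : Type} (G : SimpleGraph V) (B : Set V) : Prop :=
  (G.induce B).Connected ∧ ∀ v : B, ¬ IsCutVertex (G.induce B) v

/-- A block of `G`: a maximal connected subgraph having no cut vertex of its own. -/
def IsBlock {V : Type} (G : SimpleGraph V) (B : Set V) : Prop :=
  NoCutSet G B ∧ ∀ B' : Set V, B ⊆ B' → NoCutSet G B' → B = B'

/-- A block graph: a connected graph in which every block is complete. -/
def IsBlockGraph {V : Type} (G : SimpleGraph V) : Prop :=
  G.Connected ∧ ∀ B : Set V, IsBlock G B → ∀ u v, u ∈ B → v ∈ B → u ≠ v → G.Adj u v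

/-- The blow-up of a graph `H` by multiplicities `n`. -/
def blowup {W : Type} (H : SimpleGraph W) (n : W → ℕ) :
    SimpleGraph {p : W × ℕ // p.2 < n p.1} where
  Adj p q := p.val ≠ q.val ∧ (p.val.1 = q.val.1 ∨ H.Adj p.val.1 q.val.1)
  symm := by
    refine ⟨?_⟩
    rintro p q ⟨h1, h2 | h2⟩
    · exact ⟨fun h => h1 h.symm, Or.inl h2.symm⟩
    · exact ⟨fun h => h1 h.symm, Or.inr h2.symm⟩
  loopless := by refine ⟨?_⟩; rintro p ⟨h1, -⟩; exact h1 rfl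

/-- An extended block graph: a graph isomorphic to the blow-up of the cut vertices of a
finite block graph. -/
def IsExtendedBlockGraph {V : Type} (G : SimpleGraph V) : Prop :=
  ∃ (W : Type) (_ : Finite W) (H : SimpleGraph W) (n : W → ℕ),
    IsBlockGraph H ∧ (∀ v, 1 ≤ n v) ∧ (∀ v, ¬ IsCutVertex H v → n v = 1) ∧
    Nonempty (G ≃g blowup H n)

/-- `B` is a backbone of `G`. -/
def IsBackbone {V : Type} (G : SimpleGraph V) (B : Set V) : Prop :=
  IsExtendedBlockGraph (G.induce B) ∧
  ∀ c ∈ B, ∀ x : V, 2 ≤ G.dist c x →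
    ∃ c' ∈ stepSet G c x ∩ B, ∀ v ∈ stepSet G c x, cNbr G v ⊆ cNbr G c'

/-- A vertebrate graph: a connected graph with a backbone. -/
def IsVertebrateGraph {V : Type} (G : SimpleGraph V) : Prop :=
  G.Connected ∧ ∃ B : Set V, IsBackbone G B

/-- Every finite connected simple graph satisfying (P1) also satisfies (P2). -/
theorem P2_of_P1 {V : Type} [Fintype V] (G : SimpleGraph V)
    (hG : G.Connected) (hP1 : P1 G) : P2 G := by
  intro c x hcx c' hc' y hy
  obtain ⟨hadj, hstep⟩ := hc'
  by_contra h
  push_neg at h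
  obtain ⟨h1, h2⟩ := h
  have hcc' : G.dist c c' = 1 := SimpleGraph.dist_eq_one_iff_adj.mpr hadj
  have t1 : G.dist c' y ≤ G.dist c' c + G.dist c y := hG.dist_triangle
  have t2 : G.dist c y ≤ G.dist c c' + G.dist c' y := hG.dist_triangle
  have t3 : G.dist x y ≤ G.dist x c' + G.dist c' y := hG.dist_triangle
  have hsym : G.dist c' c = G.dist c c' := SimpleGraph.dist_comm ..
  have hsym2 : G.dist c' x = G.dist x c' := SimpleGraph.dist_comm ..
  rcases hP1 c c' x y with ⟨ha, hb⟩ | ⟨ha, hb⟩ | ⟨ha, hb⟩ <;> omega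
end

section
/- Let G be a finite connected simple graph satisfying property (P2), and define C(c,x) relative to S = V(G). If c1, c2 ∈ V(G) satisfy N[c1] ⊆ N[c2] and c1 ∈ N(c,x) for some vertices c, x with d(c,x) ≥ 2, then c2 ∈ C(c,x). -/
open SimpleGraph

/-- Every vertex at distance ≥ 1 has a neighbor on a shortest path. -/
lemma exists_step_aux {V : Type} (G : SimpleGraph V) (hG : G.Connected) (a b : V)
    (h : 1 ≤ G.dist a b) : ∃ w, G.Adj a w ∧ G.dist a b = 1 + G.dist w b := by
  obtain ⟨p, hp, hl⟩ := hG.exists_path_of_dist a b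
  have hnil : ¬ p.Nil := by
    rw [SimpleGraph.Walk.not_nil_iff_lt_length]; omega
  refine ⟨p.getVert 1, p.adj_snd hnil, le_antisymm ?_ ?_⟩
  · calc G.dist a b ≤ G.dist a (p.getVert 1) + G.dist (p.getVert 1) b := hG.dist_triangle
      _ ≤ 1 + G.dist (p.getVert 1) b := by
          have : G.dist a (p.getVert 1) = 1 := (G.dist_eq_one_iff_adj).mpr (p.adj_snd hnil)
          omega
  · have htl : p.tail.length + 1 = p.length := SimpleGraph.Walk.length_tail_add_one hnil
    have := SimpleGraph.dist_le p.tail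
    have hs : G.dist p.snd b = G.dist (p.getVert 1) b := rfl
    omega

/-- Under (P2) (with `C(c,x)` taken relative to `S = V(G)`), if
`N[c1] ⊆ N[c2]` and `c1 ∈ N(c,x)`, then `c2 ∈ C(c,x)`. -/
theorem mem_CSet_univ_of_cNbr_subset {V : Type} [Fintype V] (G : SimpleGraph V)
    (hG : G.Connected) (hP2 : P2 G)
    (c1 c2 : V) (h12 : cNbr G c1 ⊆ cNbr G c2)
    (c x : V) (hcx : 2 ≤ G.dist c x) (h1 : c1 ∈ stepSet G c x) :
    c2 ∈ CSet G Set.univ c x := by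
  obtain ⟨hadj, hd1⟩ := h1
  have hmem : ∀ w, (w = c1 ∨ G.Adj c1 w) → (w = c2 ∨ G.Adj c2 w) := by
    intro w hw
    exact (h12 (show w ∈ cNbr G c1 from hw) : w = c2 ∨ G.Adj c2 w)
  have hd1x : 1 ≤ G.dist c1 x := by omega
  -- Step A : d(c2, x) ≤ d(c1, x)
  obtain ⟨w, hw, hdw⟩ := exists_step_aux G hG c1 x hd1x
  have hA : G.dist c2 x ≤ G.dist c1 x := by
    rcases hmem w (Or.inr hw) with h | h
    · subst h; omega
    · have h2 := (G.dist_eq_one_iff_adj).mpr h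
      have := hG.dist_triangle (u := c2) (v := w) (w := x)
      omega
  -- Step B : c2 ∈ N(c, x)
  have hB : G.Adj c c2 ∧ G.dist c x = 1 + G.dist c2 x := by
    rcases hmem c (Or.inr hadj.symm) with h | h
    · subst h; omega
    · have h2 := (G.dist_eq_one_iff_adj).mpr h.symm
      have := hG.dist_triangle (u := c) (v := c2) (w := x)
      exact ⟨h.symm, by omega⟩
  refine ⟨⟨hB, trivial⟩, ?_⟩
  -- Step C : every v ∈ N(c,x) satisfies N[v] ⊆ N[c2]
  rintro v ⟨hvadj, hvd⟩ w hw
  have hw' : w = v ∨ G.Adj v w := hw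
  have hcc1 : G.dist c c1 = 1 := (G.dist_eq_one_iff_adj).mpr hadj
  have hcv : G.dist c v = 1 := (G.dist_eq_one_iff_adj).mpr hvadj
  have hxc1 : G.dist x c1 = G.dist c1 x := SimpleGraph.dist_comm
  have hxv : G.dist x v = G.dist v x := SimpleGraph.dist_comm
  have hwc1 : w = c1 ∨ G.Adj c1 w := by
    by_contra hcon
    push_neg at hcon
    obtain ⟨hne, hnadj⟩ := hcon
    have hd0 : G.dist c1 w ≠ 0 := fun h =>
      hne ((hG.preconnected c1 w).dist_eq_zero_iff.mp h).symm
    have hdne1 : G.dist c1 w ≠ 1 := fun h => hnadj ((G.dist_eq_one_iff_adj).mp h)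
    have hge2 : 2 ≤ G.dist c1 w := by omega
    have hP := hP2 c x hcx c1 ⟨hadj, hd1⟩ w hge2
    rcases hw' with rfl | hvw
    · -- w = v
      have hcw : G.dist c w = 1 := hcv
      rcases hP with h | h
      · omega
      · -- d(x,v) = d(x,c1) + d(c1,v) forces d(c1,v) = 0, i.e. v = c1
        have hv0 : G.dist c1 w = 0 := by omega
        exact hd0 hv0
    · have hvw1 : G.dist v w = 1 := (G.dist_eq_one_iff_adj).mpr hvw
      have ht1 := hG.dist_triangle (u := c) (v := v) (w := w)
      have ht2 := hG.dist_triangle (u := x) (v := v) (w := w)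
      rcases hP with h | h <;> omega
  exact h12 (hwc1 : w ∈ cNbr G c1)
end
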